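/- Suppose M is uniformly continuous. If F^{−1}(Ω) is empty, then M is non-degenerate. -/

import Mathlib

open MeasureTheory Filter Topology
open scoped ENNReal NNReal Classical

noncomputable section

/-- A countable Markov system `(K_{i(e)}, w_e, p_e)_{e ∈ E}` on a metric space `K`:
a partition `(K_j)_{j ∈ N}` of `K` into nonempty Borel sets, source and target maps
`i, t : E → N` (`i` surjective), and for each `e ∈ E` Borel maps `w_e` and probability
functions `p_e` (extended by zero outside `K_{i(e)}`) with
`∑_{e, i(e)=j} p_e(y) = 1` for `y ∈ K_j`. -/
structure MarkovSystem (K : Type*) [MetricSpace K] [MeasurableSpace K]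
    (N : Type*) (E : Type*) where
  Kset : N → Set K
  Kset_nonempty : ∀ j, (Kset j).Nonempty
  Kset_measurable : ∀ j, MeasurableSet (Kset j)
  Kset_disjoint : Pairwise (Function.onFun Disjoint Kset)
  Kset_cover : (⋃ j, Kset j) = Set.univ
  i : E → N
  t : E → N
  i_surj : Function.Surjective i
  w : E → K → K
  p : E → K → ℝ
  w_measurable : ∀ e, Measurable (w e)
  p_measurable : ∀ e, Measurable (p e)
  p_nonneg : ∀ e x, 0 ≤ p e x
  p_le_one : ∀ e x, p e x ≤ 1
  p_zero_outside : ∀ e x, x ∉ Kset (i e) → p e x = 0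
  w_mapsTo : ∀ e, Set.MapsTo (w e) (Kset (i e)) (Kset (t e))
  p_pos_somewhere : ∀ e, ∃ x ∈ Kset (i e), 0 < p e x
  p_tsum_one : ∀ j, ∀ x ∈ Kset j, (∑' e : {e : E // i e = j}, p e.val x) = 1

/-- `Ē = E ∪ {∞}` (one-point compactification); with `E` countable its Borel σ-algebra
consists of all subsets. -/
instance optionMeasurableSpace (E : Type*) : MeasurableSpace (Option E) := ⊤

/-- The code space `Σ̄ = Ē^ℤ`, carrying the product σ-algebra. -/
abbrev CodeSpace (E : Type*) : Type _ := ℤ → Option E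

/-- The left shift `S` on the code space, `(Sσ)_{k-1} = σ_k`. -/
def shiftMap (E : Type*) : CodeSpace E → CodeSpace E := fun σ k => σ (k + 1)

/-- The cylinder set `_m[es₀, …, es_{n}] = {σ : σ_{m+k} = es_k}`. -/
def cylSetL {E : Type*} (m : ℤ) (es : List (Option E)) : Set (CodeSpace E) :=
  {σ | ∀ (k : ℕ) (h : k < es.length), σ (m + (k : ℤ)) = es.get ⟨k, h⟩}

/-- The σ-algebra `𝓕` generated by the cylinder sets `_m[e_m, …, e_0]`, `m ≤ 0`. -/
def pastAlgebra (E : Type*) : MeasurableSpace (CodeSpace E) :=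
  MeasurableSpace.generateFrom
    {A | ∃ es : List (Option E), es ≠ [] ∧ A = cylSetL (1 - (es.length : ℤ)) es}

/-- The conditional entropy `h_S(Λ) = H_Λ((_1[e])_{e ∈ Ē} | 𝓕)`. -/
def entropyS {E : Type*} (Λ : Measure (CodeSpace E)) : ℝ≥0∞ :=
  ∑' eo : Option E,
    ∫⁻ σ, ENNReal.ofReal
        (Real.negMulLog
          ((Λ[Set.indicator {τ : CodeSpace E | τ 1 = eo} (fun _ => (1 : ℝ)) | pastAlgebra E]) σ)) ∂Λ

namespace MarkovSystem

variable {K : Type*} [MetricSpace K] [MeasurableSpace K] {N E : Type*}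

/-- The Markov operator `Uf = ∑_e p_e · (f ∘ w_e)` acting on nonnegative Borel functions. -/
def markovOp (M : MarkovSystem K N E) (f : K → ℝ≥0∞) : K → ℝ≥0∞ :=
  fun x => ∑' e : E, ENNReal.ofReal (M.p e x) * f (M.w e x)

/-- The adjoint operator `U*` acting on measures, `(U*ν)(B) = ∫ U(1_B) dν`. -/
def adjOp (M : MarkovSystem K N E) (ν : Measure K) : Measure K :=
  Measure.sum fun e : E =>
    Measure.map (M.w e) (ν.withDensity fun x => ENNReal.ofReal (M.p e x))

/-- `μ ∈ P(M)`: `μ` is an invariant Borel probability measure, `U*μ = μ`. -/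
def IsInvariantMeasure (M : MarkovSystem K N E) (μ : Measure K) : Prop :=
  IsProbabilityMeasure μ ∧ M.adjOp μ = μ

/-- The path space `Σ_G`: all coordinates lie in `E` and `i(σ_{n+1}) = t(σ_n)`. -/
def pathSpace (M : MarkovSystem K N E) : Set (CodeSpace E) :=
  {σ | ∀ n : ℤ, ∃ e e' : E, σ n = some e ∧ σ (n + 1) = some e' ∧ M.i e' = M.t e}

/-- `T_j = {σ ∈ Σ_G : t(σ_0) = j}`. -/
def Tset (M : MarkovSystem K N E) (j : N) : Set (CodeSpace E) :=
  {σ | σ ∈ M.pathSpace ∧ ∃ e : E, σ 0 = some e ∧ M.t e = j}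

/-- `w` extended to `Ē`, with `w_∞ = id`. -/
def wext (M : MarkovSystem K N E) : Option E → K → K := fun o => o.elim id M.w

/-- `p` extended to `Ē`, with `p_∞ = 0`. -/
def pext (M : MarkovSystem K N E) : Option E → K → ℝ := fun o => o.elim (fun _ => 0) M.p

/-- `i` extended to `Ē`, with `i(∞) = j₀`. -/
def iext (M : MarkovSystem K N E) (j0 : N) : Option E → N := fun o => o.elim j0 M.i

/-- `t` extended to `Ē`, with `t(∞) = j₀`. -/
def text (M : MarkovSystem K N E) (j0 : N) : Option E → N := fun o => o.elim j0 M.t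

/-- `iterW M σ n y = w_{σ_0} ∘ w_{σ_{-1}} ∘ ⋯ ∘ w_{σ_{-n}} (y)`. -/
def iterW (M : MarkovSystem K N E) (σ : CodeSpace E) : ℕ → K → K
  | 0, y => M.wext (σ 0) y
  | n + 1, y => M.iterW σ n (M.wext (σ (-(n + 1 : ℤ))) y)

/-- `orbit M j0 xp σ n = w_{σ_0} ∘ ⋯ ∘ w_{σ_{-n}} (x_{i(σ_{-n})})`. -/
def orbit (M : MarkovSystem K N E) (j0 : N) (xp : N → K) (σ : CodeSpace E) (n : ℕ) : K :=
  M.iterW σ n (xp (M.iext j0 (σ (-(n : ℤ)))))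

/-- `D`: the set of `σ ∈ Σ_G` for which `lim_{m → -∞} w_{σ_0} ∘ ⋯ ∘ w_{σ_m}(x_{i(σ_m)})` exists. -/
def codeDomain (M : MarkovSystem K N E) (j0 : N) (xp : N → K) : Set (CodeSpace E) :=
  {σ | σ ∈ M.pathSpace ∧ ∃ l : K, Tendsto (fun n : ℕ => M.orbit j0 xp σ n) atTop (𝓝 l)}

/-- The coding map `F`: the above limit on `D`, and `x_{t(σ_0)}` elsewhere. -/
def code (M : MarkovSystem K N E) (j0 : N) (xp : N → K) (σ : CodeSpace E) : K :=
  if h : σ ∈ M.codeDomain j0 xp then h.2.choose else xp (M.text j0 (σ 0))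

/-- `Λ ∈ E(M)`: `Λ` is a shift-invariant Borel probability measure with `Λ(D) = 1` and
`E_Λ(1_{_1[e]} | 𝓕) = p_e ∘ F` `Λ`-a.e. for every `e ∈ E` (an equilibrium state). -/
def IsEquilibrium (M : MarkovSystem K N E) (j0 : N) (xp : N → K)
    (Λ : Measure (CodeSpace E)) : Prop :=
  IsProbabilityMeasure Λ ∧ Measure.map (shiftMap E) Λ = Λ ∧
    Λ (M.codeDomain j0 xp) = 1 ∧
    ∀ e : E,
      (Λ[Set.indicator {σ : CodeSpace E | σ 1 = some e} (fun _ => (1 : ℝ)) | pastAlgebra E])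
        =ᵐ[Λ] fun σ => M.p e (M.code j0 xp σ)

/-- `pbar` is the family of continuous extensions `p̄_e` of `p_e|_{K_{i(e)}}` to the closure
of `K_{i(e)}`, extended further by zero on `K`. -/
def IsUCExtensionP (M : MarkovSystem K N E) (pbar : E → K → ℝ) : Prop :=
  ∀ e : E, ContinuousOn (pbar e) (closure (M.Kset (M.i e))) ∧
    (∀ x ∈ M.Kset (M.i e), pbar e x = M.p e x) ∧
    (∀ x, x ∉ closure (M.Kset (M.i e)) → pbar e x = 0)

/-- `wb` is a family of continuous extensions `w̄_e` of `w_e|_{K_{i(e)}}` to the closure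
of `K_{i(e)}`. -/
def IsUCExtensionW (M : MarkovSystem K N E) (wb : E → K → K) : Prop :=
  ∀ e : E, ContinuousOn (wb e) (closure (M.Kset (M.i e))) ∧
    (∀ x ∈ M.Kset (M.i e), wb e x = M.w e x)

/-- The Markov system is uniformly continuous: each `w_e|_{K_{i(e)}}` and `p_e|_{K_{i(e)}}`
is uniformly continuous. -/
def IsUniformlyContinuous (M : MarkovSystem K N E) : Prop :=
  ∀ e : E, UniformContinuousOn (M.w e) (M.Kset (M.i e)) ∧
    UniformContinuousOn (M.p e) (M.Kset (M.i e))

/-- `∂p_e = p̄_e · 1_{cl(K_{i(e)}) \ K_{i(e)}}`. -/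
def dp (M : MarkovSystem K N E) (pbar : E → K → ℝ) (e : E) : K → ℝ :=
  Set.indicator (closure (M.Kset (M.i e)) \ M.Kset (M.i e)) (pbar e)

/-- `Λ ∈ Ẽ(M)` (asymptotic state): shift-invariant probability with `Λ(D) = 1` and
`E_Λ(1_{_1[e]} | 𝓕) = (p̄_e ∘ F)·1_{T_{i(e)}}` `Λ`-a.e. for every `e`. -/
def IsAsymptotic (M : MarkovSystem K N E) (j0 : N) (xp : N → K) (pbar : E → K → ℝ)
    (Λ : Measure (CodeSpace E)) : Prop :=
  IsProbabilityMeasure Λ ∧ Measure.map (shiftMap E) Λ = Λ ∧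
    Λ (M.codeDomain j0 xp) = 1 ∧
    ∀ e : E,
      (Λ[Set.indicator {σ : CodeSpace E | σ 1 = some e} (fun _ => (1 : ℝ)) | pastAlgebra E])
        =ᵐ[Λ] Set.indicator (M.Tset (M.i e)) (fun σ => pbar e (M.code j0 xp σ))

/-- `Λ ∈ E_⊥(M)`: shift-invariant probability with `Λ(D) = 1` and
`E_Λ(1_{_1[e]} | 𝓕) = (∂p_e ∘ F)·1_{T_{i(e)}}` `Λ`-a.e. for every `e`. -/
def IsPerp (M : MarkovSystem K N E) (j0 : N) (xp : N → K) (pbar : E → K → ℝ)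
    (Λ : Measure (CodeSpace E)) : Prop :=
  IsProbabilityMeasure Λ ∧ Measure.map (shiftMap E) Λ = Λ ∧
    Λ (M.codeDomain j0 xp) = 1 ∧
    ∀ e : E,
      (Λ[Set.indicator {σ : CodeSpace E | σ 1 = some e} (fun _ => (1 : ℝ)) | pastAlgebra E])
        =ᵐ[Λ] Set.indicator (M.Tset (M.i e)) (fun σ => M.dp pbar e (M.code j0 xp σ))

/-- `G = ⋃_{k ≥ 0} ⋃_{j ∈ N} S^{-k}(F^{-1}(K_j) ∩ T_j)`. -/
def Gset (M : MarkovSystem K N E) (j0 : N) (xp : N → K) : Set (CodeSpace E) :=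
  ⋃ (k : ℕ) (j : N), (shiftMap E)^[k] ⁻¹' ((M.code j0 xp) ⁻¹' (M.Kset j) ∩ M.Tset j)

/-- `M` is non-degenerate: for every asymptotic state `Λ` there is `i ∈ N` with
`Λ(T_i ∩ F^{-1}(K_i)) > 0`. -/
def IsNonDegenerate (M : MarkovSystem K N E) (j0 : N) (xp : N → K) (pbar : E → K → ℝ) : Prop :=
  ∀ Λ : Measure (CodeSpace E), M.IsAsymptotic j0 xp pbar Λ →
    ∃ i : N, 0 < Λ (M.Tset i ∩ (M.code j0 xp) ⁻¹' (M.Kset i))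

/-- `M` is consistent: `F(Λ) ∈ P(M)` for every asymptotic state `Λ`. -/
def IsConsistent (M : MarkovSystem K N E) (j0 : N) (xp : N → K) (pbar : E → K → ℝ) : Prop :=
  ∀ Λ : Measure (CodeSpace E), M.IsAsymptotic j0 xp pbar Λ →
    M.IsInvariantMeasure (Measure.map (M.code j0 xp) Λ)

/-- `Rf = ∑_e ∂p_e · (f ∘ w̄_e)`. -/
def Rop (M : MarkovSystem K N E) (pbar : E → K → ℝ) (wb : E → K → K)
    (f : K → ℝ≥0∞) : K → ℝ≥0∞ :=
  fun x => ∑' e : E, ENNReal.ofReal (M.dp pbar e x) * f (wb e x)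

/-- `Ω = ⋂_{n ≥ 1} {R^n 1 ≥ 1}`. -/
def OmegaSet (M : MarkovSystem K N E) (pbar : E → K → ℝ) (wb : E → K → K) : Set K :=
  ⋂ n : ℕ, {x : K | 1 ≤ (M.Rop pbar wb)^[n + 1] (fun _ => 1) x}

/-- `ξ_j = ∑_{e, i(e) = j} sup_{x ∈ K_j} p_e(x)`. -/
def xi (M : MarkovSystem K N E) (j : N) : ℝ≥0∞ :=
  ∑' e : {e : E // M.i e = j}, ⨆ x ∈ M.Kset j, ENNReal.ofReal (M.p e.val x)

/-- `M` has a dominating Markov chain: `ξ_j < ∞` for all `j ∈ N`. -/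
def HasDominatingChain (M : MarkovSystem K N E) : Prop := ∀ j : N, M.xi j ≠ ⊤

/-- `ξ_j · q_{j j'} = ∑_{e, i(e) = j, t(e) = j'} sup_{x ∈ K_j} p_e(x)`. -/
def xiq (M : MarkovSystem K N E) (j j' : N) : ℝ≥0∞ :=
  ∑' e : {e : E // M.i e = j ∧ M.t e = j'}, ⨆ x ∈ M.Kset j, ENNReal.ofReal (M.p e.val x)

/-- `c = ∑_{j'} sup_j ξ_j q_{j j'}`. -/
def cConst (M : MarkovSystem K N E) : ℝ≥0∞ := ∑' j' : N, ⨆ j : N, M.xiq j j'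

/-- `α^{x_0}_n({j}) = (1/n) ∑_{k=1}^n ((U*)^k δ_{x_0})(K_j)`. -/
def alphaMeas (M : MarkovSystem K N E) (x0 : K) (n : ℕ) (j : N) : ℝ≥0∞ :=
  (n : ℝ≥0∞)⁻¹ * ∑ k ∈ Finset.range n, (M.adjOp^[k + 1] (Measure.dirac x0)) (M.Kset j)

/-- Condition (T) at `x_0`: the sequence `(α^{x_0}_n)_n` is uniformly tight. -/
def ConditionT (M : MarkovSystem K N E) (x0 : K) : Prop :=
  ∀ ε : ℝ, 0 < ε → ∃ V : Finset N,
    ∀ n : ℕ, (∑' j : {j : N // j ∉ V}, M.alphaMeas x0 (n + 1) j.val) < ENNReal.ofReal ε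

/-- `M` is contractive with contraction rate `a`:
`∑_{e, i(e) = j} p_e(x) d(w_e x, w_e y) ≤ a·d(x, y)` on each `K_j`. -/
def IsContractive (M : MarkovSystem K N E) (a : ℝ) : Prop :=
  ∀ j : N, ∀ x ∈ M.Kset j, ∀ y ∈ M.Kset j,
    (∑' e : {e : E // M.i e = j},
        ENNReal.ofReal (M.p e.val x * dist (M.w e.val x) (M.w e.val y)))
      ≤ ENNReal.ofReal (a * dist x y)

/-- `L(x) = ∑_j d(x, x_j)·1_{K_j}(x)`. -/
def Lfun (M : MarkovSystem K N E) (xp : N → K) : K → ℝ≥0∞ :=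
  fun x => ∑' j : N, Set.indicator (M.Kset j) (fun y => ENNReal.ofReal (dist y (xp j))) x

/-- `b = sup_j sup_{x ∈ K_j} ∑_{e, i(e) = j} p_e(x)·d(w_e(x_{i(e)}), x_{t(e)})`. -/
def bConst (M : MarkovSystem K N E) (xp : N → K) : ℝ≥0∞ :=
  ⨆ j : N, ⨆ x ∈ M.Kset j,
    ∑' e : {e : E // M.i e = j},
      ENNReal.ofReal (M.p e.val x * dist (M.w e.val (xp (M.i e.val))) (xp (M.t e.val)))

/-- `P^m_x` evaluated on a word: `p_{e_0}(x)·p_{e_1}(w_{e_0}x)·⋯`. -/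
def wordProb (M : MarkovSystem K N E) : List (Option E) → K → ℝ
  | [], _ => 1
  | o :: rest, x => M.pext o x * M.wordProb rest (M.wext o x)

/-- `Λ = Φ(μ)`: `Λ` is a shift-invariant Borel probability measure with
`Λ(_m[e_m, …, e_n]) = ∫ P^m_x(_m[e_m, …, e_n]) dμ(x)` for all cylinders with `m ≤ 0`. -/
def IsPhiOf (M : MarkovSystem K N E) (μ : Measure K) (Λ : Measure (CodeSpace E)) : Prop :=
  IsProbabilityMeasure Λ ∧ Measure.map (shiftMap E) Λ = Λ ∧
    ∀ m : ℤ, m ≤ 0 → ∀ es : List (Option E),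
      Λ (cylSetL m es) = ∫⁻ x, ENNReal.ofReal (M.wordProb es x) ∂μ

/-- The (negative of the) energy function: `-u(σ) = -log p_{σ_1}(F(σ))` on `D`
(`+∞` if `p_{σ_1}(F(σ)) = 0`) and `+∞` off `D`, valued in `[0, ∞]`. -/
def negEnergy (M : MarkovSystem K N E) (j0 : N) (xp : N → K) (σ : CodeSpace E) : ℝ≥0∞ :=
  if σ ∈ M.codeDomain j0 xp then
    (σ 1).elim ⊤ fun e =>
      if M.p e (M.code j0 xp σ) = 0 then ⊤
      else ENNReal.ofReal (-Real.log (M.p e (M.code j0 xp σ)))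
  else ⊤

/-- The free energy `h_S(Λ) + ∫ u dΛ`, as an extended real number. -/
def freeEnergy (M : MarkovSystem K N E) (j0 : N) (xp : N → K)
    (Λ : Measure (CodeSpace E)) : EReal :=
  (entropyS Λ : EReal) - ((∫⁻ σ, M.negEnergy j0 xp σ ∂Λ : ℝ≥0∞) : EReal)

/-- `Λ₀ ∈ E(u)`: `Λ₀` is a thermodynamic equilibrium state for the energy function `u`. -/
def IsEquilibriumForU (M : MarkovSystem K N E) (j0 : N) (xp : N → K)
    (Λ0 : Measure (CodeSpace E)) : Prop :=
  IsProbabilityMeasure Λ0 ∧ Measure.map (shiftMap E) Λ0 = Λ0 ∧ entropyS Λ0 ≠ ⊤ ∧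
    M.freeEnergy j0 xp Λ0 =
      sSup {r : EReal | ∃ Λ : Measure (CodeSpace E),
        IsProbabilityMeasure Λ ∧ Measure.map (shiftMap E) Λ = Λ ∧ entropyS Λ ≠ ⊤ ∧
          r = M.freeEnergy j0 xp Λ}

end MarkovSystem

end


variable {K : Type*} [MetricSpace K] [CompleteSpace K] [MeasurableSpace K] [BorelSpace K]
  {N E : Type*} [Countable N] [Countable E]

section Aux

variable {E' : Type*} [Countable E']

lemma measurableSet_option (s : Set (Option E')) : MeasurableSet s :=
  MeasurableSpace.measurableSet_top

lemma measurableSet_cylSetL (m : ℤ) (es : List (Option E')) :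
    MeasurableSet (cylSetL m es) := by
  have : cylSetL m es =
      ⋂ (k : ℕ) (h : k < es.length), (fun σ : CodeSpace E' => σ (m + (k : ℤ))) ⁻¹' {es.get ⟨k, h⟩} := by
    ext σ
    simp [cylSetL, Set.mem_iInter]
  rw [this]
  exact MeasurableSet.iInter fun k => MeasurableSet.iInter fun h =>
    (measurable_pi_apply _) (measurableSet_option _)

lemma pastAlgebra_le : pastAlgebra E' ≤ (by infer_instance : MeasurableSpace (CodeSpace E')) := by
  refine MeasurableSpace.generateFrom_le ?_
  rintro A ⟨es, -, rfl⟩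
  exact measurableSet_cylSetL _ _

lemma cylSetL_subset {es₁ es₂ : List (Option E')} (h : es₂.length ≤ es₁.length)
    {σ : CodeSpace E'} (hσ₁ : σ ∈ cylSetL (1 - (es₁.length : ℤ)) es₁)
    (hσ₂ : σ ∈ cylSetL (1 - (es₂.length : ℤ)) es₂) :
    cylSetL (1 - (es₁.length : ℤ)) es₁ ⊆ cylSetL (1 - (es₂.length : ℤ)) es₂ := by
  intro τ hτ k hk
  have hk' : k + (es₁.length - es₂.length) < es₁.length := by omega
  have hcoord : (1 - (es₂.length : ℤ)) + (k : ℤ) =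
      (1 - (es₁.length : ℤ)) + ((k + (es₁.length - es₂.length) : ℕ) : ℤ) := by
    push_cast [Nat.cast_sub h]
    ring
  have h₁ := hσ₁ _ hk'
  have h₂ := hσ₂ _ hk
  have h₃ := hτ _ hk'
  rw [hcoord, h₃, ← h₁, ← hcoord, h₂]

lemma isPiSystem_cylinders :
    IsPiSystem {A : Set (CodeSpace E') |
      ∃ es : List (Option E'), es ≠ [] ∧ A = cylSetL (1 - (es.length : ℤ)) es} := by
  rintro A ⟨es₁, hne₁, rfl⟩ B ⟨es₂, hne₂, rfl⟩ hAB
  obtain ⟨σ, hσ₁, hσ₂⟩ := hAB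
  rcases le_total es₂.length es₁.length with h | h
  · refine ⟨es₁, hne₁, ?_⟩
    rw [Set.inter_eq_left.mpr (cylSetL_subset h hσ₁ hσ₂)]
  · refine ⟨es₂, hne₂, ?_⟩
    rw [Set.inter_eq_right.mpr (cylSetL_subset h hσ₂ hσ₁)]

lemma measurableSet_eval_pastAlgebra {j : ℤ} (hj : j ≤ 0) (a : Option E') :
    MeasurableSet[pastAlgebra E'] {σ : CodeSpace E' | σ j = a} := by
  set n : ℕ := (1 - j).toNat with hn
  have hnz : (n : ℤ) = 1 - j := Int.toNat_of_nonneg (by omega)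
  have hnpos : 0 < n := by omega
  have hset : {σ : CodeSpace E' | σ j = a} =
      ⋃ es ∈ {es : List (Option E') | es.length = n ∧
          ∀ (h : 0 < es.length), es.get ⟨0, h⟩ = a},
        cylSetL (1 - (es.length : ℤ)) es := by
    ext σ
    simp only [Set.mem_setOf_eq, Set.mem_iUnion]
    constructor
    · intro hσ
      refine ⟨List.ofFn (fun k : Fin n => σ (j + (k : ℤ))), ⟨⟨by simp, ?_⟩, ?_⟩⟩
      · intro h
        rw [List.get_ofFn]
        simpa using hσ
      · intro k hk
        rw [List.get_ofFn]
        have hk' : (k : ℤ) = ((Fin.cast (by simp) (⟨k, hk⟩ : Fin (List.ofFn fun k : Fin n => σ (j + (k : ℤ))).length) : Fin n) : ℤ) := by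
          simp
        have hlen : ((List.ofFn fun k : Fin n => σ (j + (k : ℤ))).length : ℤ) = (n : ℤ) := by
          simp
        congr 1
        rw [hlen, hnz]
        omega
    · rintro ⟨es, ⟨hlen, hhead⟩, hσ⟩
      have h0 : 0 < es.length := by omega
      have := hσ 0 h0
      have hco : (1 - (es.length : ℤ)) + ((0 : ℕ) : ℤ) = j := by
        rw [hlen, hnz]; omega
      rw [hco] at this
      rw [this, hhead h0]
  rw [hset]
  refine MeasurableSet.biUnion (Set.to_countable _) ?_
  intro es hes
  refine MeasurableSpace.measurableSet_generateFrom ⟨es, ?_, rfl⟩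
  intro hnil
  rw [hnil] at hes
  simp at hes
  omega

end Aux

section Aux2

variable {K : Type*} [MetricSpace K] [MeasurableSpace K]
  {N E : Type*} [Countable N] [Countable E]

lemma MarkovSystem.iterW_congr (M : MarkovSystem K N E) {σ σ' : CodeSpace E} :
    ∀ (n : ℕ), (∀ k : ℕ, k ≤ n → σ (-(k : ℤ)) = σ' (-(k : ℤ))) →
      ∀ y, M.iterW σ n y = M.iterW σ' n y := by
  intro n
  induction n with
  | zero =>
    intro h y
    have h0 := h 0 le_rfl
    simp only [Nat.cast_zero, neg_zero] at h0
    simp [MarkovSystem.iterW, h0]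
  | succ n ih =>
    intro h y
    have hn1 := h (n + 1) le_rfl
    simp only [MarkovSystem.iterW]
    have : (-(((n : ℕ) + 1 : ℕ) : ℤ)) = -((n : ℤ) + 1) := by push_cast; ring
    rw [this] at hn1
    rw [hn1]
    exact ih (fun k hk => h k (by omega)) _

lemma MarkovSystem.orbit_congr (M : MarkovSystem K N E) (j0 : N) (xp : N → K)
    {σ σ' : CodeSpace E} (n : ℕ) (h : ∀ k : ℕ, k ≤ n → σ (-(k : ℤ)) = σ' (-(k : ℤ))) :
    M.orbit j0 xp σ n = M.orbit j0 xp σ' n := by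
  unfold MarkovSystem.orbit
  rw [h n le_rfl]
  exact M.iterW_congr n h _

/-- Projection onto the coordinates `0, -1, …, -n`. -/
def projFun (E : Type*) (n : ℕ) : CodeSpace E → (Fin (n + 1) → Option E) :=
  fun σ k => σ (-(k : ℤ))

/-- Extension of a finite word to a two-sided sequence. -/
def extFun (E : Type*) (n : ℕ) : (Fin (n + 1) → Option E) → CodeSpace E :=
  fun v z =>
    if h : 0 ≤ -z ∧ -z < ((n : ℤ) + 1) then v ⟨(-z).toNat, by omega⟩ else none

lemma extFun_projFun (E : Type*) (n : ℕ) (σ : CodeSpace E) {k : ℕ} (hk : k ≤ n) :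
    extFun E n (projFun E n σ) (-(k : ℤ)) = σ (-(k : ℤ)) := by
  have h : 0 ≤ -(-(k : ℤ)) ∧ -(-(k : ℤ)) < ((n : ℤ) + 1) := by omega
  rw [extFun, dif_pos h]
  show σ _ = _
  congr 1
  simp only [Fin.val_mk]
  omega

lemma measurableSet_word {E : Type*} [Countable E] {n : ℕ} (s : Set (Fin (n + 1) → Option E)) :
    MeasurableSet s := by
  have hsing : ∀ τ : Fin (n + 1) → Option E, MeasurableSet {τ} := by
    intro τ
    have : {τ} = ⋂ k, (fun g : Fin (n + 1) → Option E => g k) ⁻¹' {τ k} := by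
      ext g
      simp [funext_iff]
    rw [this]
    exact MeasurableSet.iInter fun k => (measurable_pi_apply k) (measurableSet_option _)
  have hs : s = ⋃ τ ∈ s, {τ} := by simp
  rw [hs]
  exact MeasurableSet.biUnion (Set.to_countable s) fun τ _ => hsing τ

lemma measurable_projFun {E : Type*} [Countable E] (n : ℕ) :
    Measurable[pastAlgebra E] (projFun E n) := by
  intro s _
  have : projFun E n ⁻¹' s = ⋃ τ ∈ s, ⋂ k : Fin (n + 1), {σ : CodeSpace E | σ (-(k : ℤ)) = τ k} := by
    ext σ
    simp only [Set.mem_preimage, Set.mem_iUnion, Set.mem_iInter, Set.mem_setOf_eq]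
    constructor
    · intro h
      exact ⟨projFun E n σ, h, fun k => rfl⟩
    · rintro ⟨τ, hτ, hk⟩
      have hfe : projFun E n σ = τ := funext fun k => hk k
      rwa [hfe]
  rw [this]
  exact MeasurableSet.biUnion (Set.to_countable s) fun τ _ =>
    MeasurableSet.iInter fun k => measurableSet_eval_pastAlgebra (by omega) (τ k)

lemma MarkovSystem.orbit_factor (M : MarkovSystem K N E) (j0 : N) (xp : N → K) (n : ℕ) :
    (fun σ => M.orbit j0 xp σ n) =
      (fun v => M.orbit j0 xp (extFun E n v) n) ∘ projFun E n := by
  funext σ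
  show M.orbit j0 xp σ n = M.orbit j0 xp (extFun E n (projFun E n σ)) n
  exact M.orbit_congr j0 xp n (fun k hk => (extFun_projFun E n σ hk).symm)

lemma MarkovSystem.measurable_orbit (M : MarkovSystem K N E) (j0 : N) (xp : N → K) (n : ℕ) :
    Measurable[pastAlgebra E] (fun σ => M.orbit j0 xp σ n) := by
  rw [M.orbit_factor j0 xp n]
  intro s _
  exact measurable_projFun n (measurableSet_word ((fun v => M.orbit j0 xp (extFun E n v) n) ⁻¹' s))

lemma MarkovSystem.countable_range_orbit (M : MarkovSystem K N E) (j0 : N) (xp : N → K) (n : ℕ) :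
    (Set.range (fun σ => M.orbit j0 xp σ n)).Countable := by
  rw [M.orbit_factor j0 xp n]
  exact (Set.countable_range _).mono (Set.range_comp_subset_range _ _)

/-- The set of codes along which the orbit is Cauchy. -/
def cauchySet (M : MarkovSystem K N E) (j0 : N) (xp : N → K) : Set (CodeSpace E) :=
  {σ | CauchySeq (fun n => M.orbit j0 xp σ n)}

lemma measurableSet_cauchySet (M : MarkovSystem K N E) (j0 : N) (xp : N → K) :
    MeasurableSet[pastAlgebra E] (cauchySet M j0 xp) := by
  have hdist : ∀ a b : ℕ, ∀ c : ℝ, MeasurableSet[pastAlgebra E]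
      {σ : CodeSpace E | dist (M.orbit j0 xp σ a) (M.orbit j0 xp σ b) < c} := by
    intro a b c
    have hab : a ≤ max a b := le_max_left a b
    have hbb : b ≤ max a b := le_max_right a b
    have : {σ : CodeSpace E | dist (M.orbit j0 xp σ a) (M.orbit j0 xp σ b) < c} =
        projFun E (max a b) ⁻¹'
          {v | dist (M.orbit j0 xp (extFun E (max a b) v) a)
            (M.orbit j0 xp (extFun E (max a b) v) b) < c} := by
      ext σ
      simp only [Set.mem_setOf_eq, Set.mem_preimage]
      rw [M.orbit_congr j0 xp a (fun k hk => (extFun_projFun E (max a b) σ (by omega)).symm),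
        M.orbit_congr j0 xp b (fun k hk => (extFun_projFun E (max a b) σ (by omega)).symm)]
    rw [this]
    exact measurable_projFun (max a b) (measurableSet_word _)
  have : cauchySet M j0 xp =
      ⋂ (k : ℕ), ⋃ (N' : ℕ), ⋂ (m : ℕ),
        {σ : CodeSpace E | dist (M.orbit j0 xp σ (m + N')) (M.orbit j0 xp σ N')
          < 1 / ((k : ℝ) + 1)} := by
    ext σ
    simp only [cauchySet, Set.mem_setOf_eq, Set.mem_iInter, Set.mem_iUnion]
    constructor
    · intro h k
      obtain ⟨N', hN'⟩ := (Metric.cauchySeq_iff'.mp h) (1 / ((k : ℝ) + 1))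
        (by positivity)
      exact ⟨N', fun m => hN' (m + N') (by omega)⟩
    · intro h
      refine Metric.cauchySeq_iff'.mpr ?_
      intro ε hε
      obtain ⟨k, hk⟩ := exists_nat_one_div_lt hε
      obtain ⟨N', hN'⟩ := h k
      refine ⟨N', fun m hm => ?_⟩
      have := hN' (m - N')
      rw [Nat.sub_add_cancel hm] at this
      exact this.trans hk
  rw [this]
  exact MeasurableSet.iInter fun k => MeasurableSet.iUnion fun N' =>
    MeasurableSet.iInter fun m => hdist _ _ _

lemma MarkovSystem.codeDomain_eq [CompleteSpace K] (M : MarkovSystem K N E) (j0 : N)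
    (xp : N → K) : M.codeDomain j0 xp = M.pathSpace ∩ cauchySet M j0 xp := by
  ext σ
  constructor
  · rintro ⟨hp, l, hl⟩
    exact ⟨hp, hl.cauchySeq⟩
  · rintro ⟨hp, hc⟩
    exact ⟨hp, cauchySeq_tendsto_of_complete hc⟩

/-- An everywhere-convergent modification of the orbit. -/
noncomputable def orbitC (M : MarkovSystem K N E) (j0 : N) (xp : N → K) (n : ℕ) :
    CodeSpace E → K :=
  (cauchySet M j0 xp).piecewise (fun σ => M.orbit j0 xp σ n) (fun _ => xp j0)

lemma orbitC_exists_lim [CompleteSpace K] (M : MarkovSystem K N E) (j0 : N) (xp : N → K)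
    (σ : CodeSpace E) : ∃ l, Tendsto (fun n => orbitC M j0 xp n σ) atTop (𝓝 l) := by
  by_cases h : σ ∈ cauchySet M j0 xp
  · have : (fun n => orbitC M j0 xp n σ) = fun n => M.orbit j0 xp σ n := by
      funext n; simp [orbitC, Set.piecewise_eq_of_mem _ _ _ h]
    rw [this]
    exact cauchySeq_tendsto_of_complete h
  · have : (fun n => orbitC M j0 xp n σ) = fun _ => xp j0 := by
      funext n; simp [orbitC, Set.piecewise_eq_of_notMem _ _ _ h]
    rw [this]
    exact ⟨xp j0, tendsto_const_nhds⟩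

/-- A `pastAlgebra`-measurable version of the coding map. -/
noncomputable def gfun [CompleteSpace K] (M : MarkovSystem K N E) (j0 : N) (xp : N → K) :
    CodeSpace E → K :=
  fun σ => (orbitC_exists_lim M j0 xp σ).choose

lemma gfun_tendsto [CompleteSpace K] (M : MarkovSystem K N E) (j0 : N) (xp : N → K)
    (σ : CodeSpace E) :
    Tendsto (fun n => orbitC M j0 xp n σ) atTop (𝓝 (gfun M j0 xp σ)) :=
  (orbitC_exists_lim M j0 xp σ).choose_spec

lemma MarkovSystem.code_tendsto (M : MarkovSystem K N E) (j0 : N) (xp : N → K)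
    {σ : CodeSpace E} (hσ : σ ∈ M.codeDomain j0 xp) :
    Tendsto (fun n => M.orbit j0 xp σ n) atTop (𝓝 (M.code j0 xp σ)) := by
  rw [MarkovSystem.code, dif_pos hσ]
  exact hσ.2.choose_spec

lemma gfun_eq_code [CompleteSpace K] (M : MarkovSystem K N E) (j0 : N) (xp : N → K)
    {σ : CodeSpace E} (hσ : σ ∈ M.codeDomain j0 xp) :
    gfun M j0 xp σ = M.code j0 xp σ := by
  have h1 := gfun_tendsto M j0 xp σ
  have hc : σ ∈ cauchySet M j0 xp := (M.code_tendsto j0 xp hσ).cauchySeq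
  have : (fun n => orbitC M j0 xp n σ) = fun n => M.orbit j0 xp σ n := by
    funext n; simp [orbitC, Set.piecewise_eq_of_mem _ _ _ hc]
  rw [this] at h1
  exact tendsto_nhds_unique h1 (M.code_tendsto j0 xp hσ)

lemma stronglyMeasurable_gfun [CompleteSpace K] [BorelSpace K] (M : MarkovSystem K N E)
    (j0 : N) (xp : N → K) : StronglyMeasurable[pastAlgebra E] (gfun M j0 xp) := by
  refine stronglyMeasurable_of_tendsto (f := fun n => orbitC M j0 xp n) atTop
    (fun n => ?_) (tendsto_pi_nhds.mpr (gfun_tendsto M j0 xp))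
  refine stronglyMeasurable_iff_measurable_separable.mpr ⟨?_, ?_⟩
  · exact Measurable.piecewise (measurableSet_cauchySet M j0 xp)
      (M.measurable_orbit j0 xp n) measurable_const
  · refine Set.Countable.isSeparable ?_
    refine Set.Countable.mono ?_ ((M.countable_range_orbit j0 xp n).insert (xp j0))
    rintro - ⟨σ, rfl⟩
    by_cases h : σ ∈ cauchySet M j0 xp
    · exact Set.mem_insert_of_mem _ ⟨σ, by simp [orbitC, Set.piecewise_eq_of_mem _ _ _ h]⟩
    · left
      simp [orbitC, Set.piecewise_eq_of_notMem _ _ _ h]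

end Aux2

section Aux3

variable {K : Type*} [MetricSpace K] [MeasurableSpace K]
  {N E : Type*} [Countable N] [Countable E]

lemma measurable_shiftMap : Measurable (shiftMap E) :=
  measurable_pi_lambda _ fun k => measurable_pi_apply (k + 1)

lemma MarkovSystem.measurableSet_pathSpace (M : MarkovSystem K N E) :
    MeasurableSet M.pathSpace := by
  have : M.pathSpace = ⋂ n : ℤ, ⋃ (e : E) (e' : E) (_ : M.i e' = M.t e),
      ({σ : CodeSpace E | σ n = some e} ∩ {σ : CodeSpace E | σ (n + 1) = some e'}) := by
    ext σ
    simp only [MarkovSystem.pathSpace, Set.mem_setOf_eq, Set.mem_iInter, Set.mem_iUnion,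
      Set.mem_inter_iff]
    constructor
    · intro h n
      obtain ⟨e, e', h1, h2, h3⟩ := h n
      exact ⟨e, e', h3, h1, h2⟩
    · intro h n
      obtain ⟨e, e', h3, h1, h2⟩ := h n
      exact ⟨e, e', h1, h2, h3⟩
  rw [this]
  refine MeasurableSet.iInter fun n => MeasurableSet.iUnion fun e =>
    MeasurableSet.iUnion fun e' => MeasurableSet.iUnion fun _ => MeasurableSet.inter ?_ ?_
  · show MeasurableSet ((fun σ : CodeSpace E => σ n) ⁻¹' {some e})
    exact (measurable_pi_apply (X := fun _ : ℤ => Option E) n) (measurableSet_option _)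
  · show MeasurableSet ((fun σ : CodeSpace E => σ (n + 1)) ⁻¹' {some e'})
    exact (measurable_pi_apply (X := fun _ : ℤ => Option E) (n + 1)) (measurableSet_option _)

lemma MarkovSystem.shift_mem_pathSpace (M : MarkovSystem K N E) {σ : CodeSpace E}
    (hσ : σ ∈ M.pathSpace) : shiftMap E σ ∈ M.pathSpace := by
  intro n
  obtain ⟨e, e', h1, h2, h3⟩ := hσ (n + 1)
  exact ⟨e, e', h1, by rw [shiftMap]; exact h2, h3⟩

lemma MarkovSystem.iterW_shift (M : MarkovSystem K N E) (σ : CodeSpace E) :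
    ∀ (n : ℕ) (y : K), M.iterW (shiftMap E σ) (n + 1) y = M.wext (σ 1) (M.iterW σ n y) := by
  intro n
  induction n with
  | zero =>
    intro y
    show M.iterW (shiftMap E σ) 0 (M.wext (shiftMap E σ (-(((0 : ℕ) : ℤ) + 1))) y) = _
    have h1 : shiftMap E σ (-(((0 : ℕ) : ℤ) + 1)) = σ 0 := by
      show σ _ = σ 0; norm_num
    have h2 : shiftMap E σ 0 = σ 1 := by
      show σ _ = σ 1; norm_num
    simp only [MarkovSystem.iterW, h1, h2]
  | succ n ih =>
    intro y
    show M.iterW (shiftMap E σ) (n + 1) (M.wext (shiftMap E σ (-((((n : ℕ) + 1 : ℕ) : ℤ) + 1))) y) = _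
    have h1 : shiftMap E σ (-((((n : ℕ) + 1 : ℕ) : ℤ) + 1)) = σ (-(((n : ℕ) : ℤ) + 1)) := by
      have harg : (-((((n : ℕ) + 1 : ℕ) : ℤ) + 1)) + 1 = -(((n : ℕ) : ℤ) + 1) := by
        push_cast; ring
      show σ ((-((((n : ℕ) + 1 : ℕ) : ℤ) + 1)) + 1) = _
      rw [harg]
    rw [h1, ih]
    rfl

lemma MarkovSystem.orbit_shift (M : MarkovSystem K N E) (j0 : N) (xp : N → K)
    (σ : CodeSpace E) (n : ℕ) :
    M.orbit j0 xp (shiftMap E σ) (n + 1) = M.wext (σ 1) (M.orbit j0 xp σ n) := by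
  unfold MarkovSystem.orbit
  have h1 : shiftMap E σ (-(((n + 1 : ℕ) : ℤ))) = σ (-((n : ℕ) : ℤ)) := by
    have harg : (-(((n + 1 : ℕ) : ℤ))) + 1 = -((n : ℕ) : ℤ) := by
      push_cast; ring
    show σ ((-(((n + 1 : ℕ) : ℤ))) + 1) = _
    rw [harg]
  rw [h1]
  exact M.iterW_shift σ n _

lemma MarkovSystem.iterW_mem (M : MarkovSystem K N E) :
    ∀ (n : ℕ) {σ : CodeSpace E}, σ ∈ M.pathSpace → ∀ {e0 en : E}, σ 0 = some e0 →
      σ (-(n : ℤ)) = some en → ∀ y ∈ M.Kset (M.i en), M.iterW σ n y ∈ M.Kset (M.t e0) := by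
  intro n
  induction n with
  | zero =>
    intro σ hσ e0 en h0 hn y hy
    rw [show (-((0 : ℕ) : ℤ)) = (0 : ℤ) by norm_num] at hn
    rw [h0] at hn
    injection hn with hn
    subst hn
    show M.wext (σ 0) y ∈ _
    rw [h0]
    exact M.w_mapsTo e0 hy
  | succ n ih =>
    intro σ hσ e0 en1 h0 hn1 y hy
    obtain ⟨e, e', he, he', hie'⟩ := hσ (-((n + 1 : ℕ) : ℤ))
    have he2 : (some en1 : Option E) = some e := by rw [← hn1, he]
    injection he2 with he2
    subst he2
    have hcoord : (-((n + 1 : ℕ) : ℤ)) + 1 = -((n : ℕ) : ℤ) := by push_cast; ring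
    rw [hcoord] at he'
    show M.iterW σ n (M.wext (σ (-((n : ℕ) + 1 : ℤ))) y) ∈ _
    have hc2 : (-((n : ℕ) + 1 : ℤ)) = -((n + 1 : ℕ) : ℤ) := by push_cast; ring
    rw [hc2, he]
    have hw : M.w en1 y ∈ M.Kset (M.i e') := by
      rw [hie']
      exact M.w_mapsTo en1 hy
    exact ih hσ h0 he' _ hw

lemma MarkovSystem.orbit_mem (M : MarkovSystem K N E) (j0 : N) (xp : N → K)
    (hxp : ∀ j, xp j ∈ M.Kset j) {σ : CodeSpace E} (hσ : σ ∈ M.pathSpace) (n : ℕ)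
    {e0 : E} (h0 : σ 0 = some e0) : M.orbit j0 xp σ n ∈ M.Kset (M.t e0) := by
  obtain ⟨en, -, hen, -, -⟩ := hσ (-(n : ℤ))
  unfold MarkovSystem.orbit
  rw [hen]
  exact M.iterW_mem n hσ h0 hen _ (hxp _)

/-- If `σ` is in the coding domain and `σ 1 = e`, then the shifted sequence also is,
`F(Sσ) = w̄_e(F(σ))`, and `F(σ)` lies in the closure of `K_{i(e)}`. -/
lemma MarkovSystem.code_shift (M : MarkovSystem K N E) (j0 : N) (xp : N → K)
    (hxp : ∀ j, xp j ∈ M.Kset j) {wb : E → K → K} (hwb : M.IsUCExtensionW wb)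
    {σ : CodeSpace E} (hσ : σ ∈ M.codeDomain j0 xp) {e1 : E} (he1 : σ 1 = some e1) :
    shiftMap E σ ∈ M.codeDomain j0 xp ∧
      M.code j0 xp (shiftMap E σ) = wb e1 (M.code j0 xp σ) ∧
      M.code j0 xp σ ∈ closure (M.Kset (M.i e1)) := by
  have hp := hσ.1
  obtain ⟨e0, e1', h0, h1, hie⟩ := hp 0
  rw [show (0 : ℤ) + 1 = 1 by norm_num] at h1
  rw [he1] at h1
  injection h1 with h1
  subst h1
  have horb : ∀ n, M.orbit j0 xp σ n ∈ M.Kset (M.i e1) := by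
    intro n
    rw [hie]
    exact M.orbit_mem j0 xp hxp hp n h0
  have htend := M.code_tendsto j0 xp hσ
  have hclos : M.code j0 xp σ ∈ closure (M.Kset (M.i e1)) :=
    mem_closure_of_tendsto htend (Filter.Eventually.of_forall fun n => horb n)
  have hcw : ContinuousWithinAt (wb e1) (closure (M.Kset (M.i e1))) (M.code j0 xp σ) :=
    (hwb e1).1 _ hclos
  have htend2 : Tendsto (fun n => wb e1 (M.orbit j0 xp σ n)) atTop
      (𝓝 (wb e1 (M.code j0 xp σ))) := by
    refine hcw.tendsto.comp ?_
    rw [tendsto_nhdsWithin_iff]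
    exact ⟨htend, Filter.Eventually.of_forall fun n => subset_closure (horb n)⟩
  have heq : ∀ n, wb e1 (M.orbit j0 xp σ n) = M.orbit j0 xp (shiftMap E σ) (n + 1) := by
    intro n
    rw [M.orbit_shift j0 xp σ n, (hwb e1).2 _ (horb n)]
    show M.w e1 _ = M.wext (σ 1) _
    rw [he1]
    rfl
  have htend3 : Tendsto (fun n => M.orbit j0 xp (shiftMap E σ) (n + 1)) atTop
      (𝓝 (wb e1 (M.code j0 xp σ))) := by
    refine htend2.congr ?_
    intro n
    exact heq n
  have htend4 : Tendsto (fun n => M.orbit j0 xp (shiftMap E σ) n) atTop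
      (𝓝 (wb e1 (M.code j0 xp σ))) := by
    rwa [← tendsto_add_atTop_iff_nat 1]
  have hSD : shiftMap E σ ∈ M.codeDomain j0 xp :=
    ⟨M.shift_mem_pathSpace hp, _, htend4⟩
  exact ⟨hSD, tendsto_nhds_unique (M.code_tendsto j0 xp hSD) htend4, hclos⟩

end Aux3

section Aux4

variable {K : Type*} [MetricSpace K] [MeasurableSpace K] [BorelSpace K]
  {N E : Type*} [Countable N] [Countable E]

lemma measurable_piecewise_of_continuousOn {β : Type*} [TopologicalSpace β]
    [MeasurableSpace β] [BorelSpace β] {f : K → β} {s : Set K} [∀ j, Decidable (j ∈ s)]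
    (hs : MeasurableSet s)
    (hf : ContinuousOn f s) (c : β) : Measurable (s.piecewise f (fun _ => c)) := by
  refine measurable_of_isOpen ?_
  intro U hU
  rw [Set.piecewise_preimage, Set.ite]
  obtain ⟨V, hV, hVeq⟩ := continuousOn_iff'.mp hf U hU
  refine MeasurableSet.union ?_ ?_
  · rw [hVeq]
    exact hV.measurableSet.inter hs
  · exact MeasurableSet.diff (measurable_const hU.measurableSet) hs

/-- A measurable modification of `w̄_e` (equal to it on the closure of `K_{i(e)}`). -/
noncomputable def wbg (M : MarkovSystem K N E) (wb : E → K → K) (j0 : N) (xp : N → K)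
    (e : E) : K → K :=
  (closure (M.Kset (M.i e))).piecewise (wb e) (fun _ => xp j0)

lemma measurable_wbg (M : MarkovSystem K N E) {wb : E → K → K} (hwb : M.IsUCExtensionW wb)
    (j0 : N) (xp : N → K) (e : E) : Measurable (wbg M wb j0 xp e) :=
  measurable_piecewise_of_continuousOn isClosed_closure.measurableSet (hwb e).1 _

lemma measurable_ofReal_dp (M : MarkovSystem K N E) {pbar : E → K → ℝ}
    (hpbar : M.IsUCExtensionP pbar) (e : E) :
    Measurable (fun x => ENNReal.ofReal (M.dp pbar e x)) := by
  have heq : (fun x => ENNReal.ofReal (M.dp pbar e x)) =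
      (closure (M.Kset (M.i e)) \ M.Kset (M.i e)).piecewise
        (fun x => ENNReal.ofReal (pbar e x)) (fun _ => 0) := by
    funext x
    by_cases hx : x ∈ closure (M.Kset (M.i e)) \ M.Kset (M.i e)
    · rw [Set.piecewise_eq_of_mem _ _ _ hx, MarkovSystem.dp, Set.indicator_of_mem hx]
    · rw [Set.piecewise_eq_of_notMem _ _ _ hx, MarkovSystem.dp, Set.indicator_of_notMem hx]
      simp
  rw [heq]
  refine measurable_piecewise_of_continuousOn (β := ℝ≥0∞)
    (isClosed_closure.measurableSet.diff (M.Kset_measurable _)) ?_ _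
  exact ENNReal.continuous_ofReal.comp_continuousOn ((hpbar e).1.mono Set.diff_subset)

lemma dp_eq_zero_of_not_mem_closure (M : MarkovSystem K N E) (pbar : E → K → ℝ) (e : E)
    {x : K} (hx : x ∉ closure (M.Kset (M.i e))) : M.dp pbar e x = 0 := by
  rw [MarkovSystem.dp, Set.indicator_of_notMem]
  exact fun h => hx h.1

lemma MarkovSystem.Rop_eq_good (M : MarkovSystem K N E) (pbar : E → K → ℝ) (wb : E → K → K)
    (j0 : N) (xp : N → K) (f : K → ℝ≥0∞) :
    M.Rop pbar wb f = fun x => ∑' e : E,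
      ENNReal.ofReal (M.dp pbar e x) * f (wbg M wb j0 xp e x) := by
  funext x
  rw [MarkovSystem.Rop]
  congr 1
  funext e
  by_cases hx : x ∈ closure (M.Kset (M.i e))
  · rw [wbg, Set.piecewise_eq_of_mem _ _ _ hx]
  · rw [dp_eq_zero_of_not_mem_closure M pbar e hx]
    simp

lemma measurable_Rop (M : MarkovSystem K N E) {pbar : E → K → ℝ} {wb : E → K → K}
    (hpbar : M.IsUCExtensionP pbar) (hwb : M.IsUCExtensionW wb) (j0 : N) (xp : N → K)
    {f : K → ℝ≥0∞} (hf : Measurable f) : Measurable (M.Rop pbar wb f) := by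
  rw [M.Rop_eq_good pbar wb j0 xp f]
  exact Measurable.ennreal_tsum fun e =>
    (measurable_ofReal_dp M hpbar e).mul (hf.comp (measurable_wbg M hwb j0 xp e))

lemma measurable_RopIter (M : MarkovSystem K N E) {pbar : E → K → ℝ} {wb : E → K → K}
    (hpbar : M.IsUCExtensionP pbar) (hwb : M.IsUCExtensionW wb) (j0 : N) (xp : N → K)
    (n : ℕ) : Measurable ((M.Rop pbar wb)^[n] (fun _ => 1)) := by
  induction n with
  | zero => exact measurable_const
  | succ n ih =>
    rw [Function.iterate_succ_apply']
    exact measurable_Rop M hpbar hwb j0 xp ih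

end Aux4

section Aux5

variable {E : Type*} [Countable E]

/-- The defining property of conditional expectation, in `lintegral` form with an
arbitrary nonnegative `pastAlgebra`-measurable weight. -/
lemma lintegral_mul_indicator_condexp (Λ : Measure (CodeSpace E)) [IsProbabilityMeasure Λ]
    {s : Set (CodeSpace E)} (hs : MeasurableSet s)
    {G : CodeSpace E → ℝ≥0∞} (hG : Measurable[pastAlgebra E] G) :
    ∫⁻ σ, G σ * s.indicator 1 σ ∂Λ =
      ∫⁻ σ, G σ * ENNReal.ofReal ((Λ[s.indicator (fun _ => (1 : ℝ)) | pastAlgebra E]) σ) ∂Λ := by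
  have hle : pastAlgebra E ≤ (by infer_instance : MeasurableSpace (CodeSpace E)) := pastAlgebra_le
  set f := s.indicator (fun _ => (1 : ℝ)) with hf
  have hfi : Integrable f Λ := (integrable_const (1 : ℝ)).indicator hs
  set ce := Λ[f | pastAlgebra E] with hcedef
  have hce_m : StronglyMeasurable[pastAlgebra E] ce := stronglyMeasurable_condExp
  have hce_nn : 0 ≤ᵐ[Λ] ce :=
    condExp_nonneg (Filter.Eventually.of_forall fun σ =>
      Set.indicator_nonneg (fun _ _ => zero_le_one) σ)
  have hd1 : Measurable (s.indicator (1 : CodeSpace E → ℝ≥0∞)) := measurable_one.indicator hs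
  have hd2m : Measurable[pastAlgebra E] fun σ => ENNReal.ofReal (ce σ) :=
    ENNReal.measurable_ofReal.comp hce_m.measurable
  have hd2 : Measurable fun σ => ENNReal.ofReal (ce σ) := hd2m.mono hle le_rfl
  have hG' : Measurable G := hG.mono hle le_rfl
  have hagree : ∀ A : Set (CodeSpace E), MeasurableSet[pastAlgebra E] A →
      ∫⁻ σ in A, s.indicator 1 σ ∂Λ = ∫⁻ σ in A, ENNReal.ofReal (ce σ) ∂Λ := by
    intro A hA
    have hA' : MeasurableSet A := hle _ hA
    have h1 : ∫⁻ σ in A, s.indicator 1 σ ∂Λ = Λ (s ∩ A) := by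
      rw [lintegral_indicator_one hs, Measure.restrict_apply hs]
    have h2 : ∫⁻ σ in A, ENNReal.ofReal (ce σ) ∂Λ = ENNReal.ofReal (∫ σ in A, ce σ ∂Λ) :=
      (ofReal_integral_eq_lintegral_ofReal (integrable_condExp.restrict)
        (ae_restrict_of_ae hce_nn)).symm
    have h3 : ∫ σ in A, ce σ ∂Λ = ∫ σ in A, f σ ∂Λ := setIntegral_condExp hle hfi hA
    have h4 : ∫ σ in A, f σ ∂Λ = ((Λ.restrict A) s).toReal • (1 : ℝ) :=
      integral_indicator_const (1 : ℝ) hs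
    rw [h1, h2, h3, h4, Measure.restrict_apply hs, smul_eq_mul, mul_one,
      ENNReal.ofReal_toReal (measure_ne_top _ _)]
  haveI hfin1 : IsFiniteMeasure (Λ.withDensity (s.indicator 1)) := by
    refine isFiniteMeasure_withDensity ?_
    rw [lintegral_indicator_one hs]
    exact measure_ne_top _ _
  haveI hfin2 : IsFiniteMeasure (Λ.withDensity fun σ => ENNReal.ofReal (ce σ)) := by
    refine isFiniteMeasure_withDensity ?_
    rw [← ofReal_integral_eq_lintegral_ofReal integrable_condExp hce_nn]
    exact ENNReal.ofReal_ne_top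
  have hmeq : (Λ.withDensity (s.indicator 1)).trim hle =
      (Λ.withDensity fun σ => ENNReal.ofReal (ce σ)).trim hle := by
    refine ext_of_generate_finite _ rfl isPiSystem_cylinders ?_ ?_
    · intro A hA
      have hAm : MeasurableSet[pastAlgebra E] A := MeasurableSpace.measurableSet_generateFrom hA
      rw [trim_measurableSet_eq hle hAm, trim_measurableSet_eq hle hAm,
        withDensity_apply _ (hle _ hAm), withDensity_apply _ (hle _ hAm)]
      exact hagree A hAm
    · rw [trim_measurableSet_eq hle MeasurableSet.univ,
        trim_measurableSet_eq hle MeasurableSet.univ,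
        withDensity_apply _ MeasurableSet.univ, withDensity_apply _ MeasurableSet.univ]
      exact hagree Set.univ MeasurableSet.univ
  calc ∫⁻ σ, G σ * s.indicator 1 σ ∂Λ
      = ∫⁻ σ, (s.indicator (1 : CodeSpace E → ℝ≥0∞) * G) σ ∂Λ := by
        refine lintegral_congr fun σ => ?_
        exact mul_comm _ _
    _ = ∫⁻ σ, G σ ∂(Λ.withDensity (s.indicator 1)) :=
        (lintegral_withDensity_eq_lintegral_mul Λ hd1 hG').symm
    _ = ∫⁻ σ, G σ ∂((Λ.withDensity (s.indicator 1)).trim hle) := (lintegral_trim hle hG).symm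
    _ = ∫⁻ σ, G σ ∂((Λ.withDensity fun σ => ENNReal.ofReal (ce σ)).trim hle) := by rw [hmeq]
    _ = ∫⁻ σ, G σ ∂(Λ.withDensity fun σ => ENNReal.ofReal (ce σ)) := lintegral_trim hle hG
    _ = ∫⁻ σ, ((fun σ => ENNReal.ofReal (ce σ)) * G) σ ∂Λ :=
        lintegral_withDensity_eq_lintegral_mul Λ hd2 hG'
    _ = ∫⁻ σ, G σ * ENNReal.ofReal (ce σ) ∂Λ := by
        refine lintegral_congr fun σ => ?_
        exact mul_comm _ _

/-- Extraction: if `Λ A ≤ ∫_A h` for all `A` in the past algebra and `h` is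
past-measurable, then `h ≥ 1` a.e. -/
lemma ae_one_le_of_forall_setLIntegral (Λ : Measure (CodeSpace E)) [IsFiniteMeasure Λ]
    {h : CodeSpace E → ℝ≥0∞} (hm : Measurable[pastAlgebra E] h)
    (hineq : ∀ A : Set (CodeSpace E), MeasurableSet[pastAlgebra E] A →
      Λ A ≤ ∫⁻ σ in A, h σ ∂Λ) :
    ∀ᵐ σ ∂Λ, 1 ≤ h σ := by
  have hle : pastAlgebra E ≤ (by infer_instance : MeasurableSpace (CodeSpace E)) := pastAlgebra_le
  have hm' : Measurable h := hm.mono hle le_rfl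
  have key : ∀ c : ℝ≥0∞, c < 1 → Λ {σ | h σ ≤ c} = 0 := by
    intro c hc
    set A := {σ | h σ ≤ c} with hAdef
    have hA : MeasurableSet[pastAlgebra E] A := hm measurableSet_Iic
    have h1 : Λ A ≤ c * Λ A := by
      refine (hineq A hA).trans ?_
      calc ∫⁻ σ in A, h σ ∂Λ ≤ ∫⁻ _ in A, c ∂Λ :=
            setLIntegral_mono measurable_const fun σ hσ => hσ
        _ = c * Λ A := by rw [setLIntegral_const]
    by_contra h0
    have : c * Λ A < 1 * Λ A := by
      rw [mul_comm c, mul_comm 1]; exact ENNReal.mul_lt_mul_right h0 (measure_ne_top Λ A) hc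
    rw [one_mul] at this
    exact lt_irrefl _ (lt_of_le_of_lt h1 this)
  have hsub : {σ | h σ < 1} ⊆
      ⋃ q : ℚ, {σ | h σ ≤ (Real.toNNReal q : ℝ≥0∞) ∧ ((Real.toNNReal q : ℝ≥0∞) < 1)} := by
    intro σ hσ
    obtain ⟨q, -, hq1, hq2⟩ := ENNReal.lt_iff_exists_rat_btwn.mp hσ
    exact Set.mem_iUnion.mpr ⟨q, le_of_lt hq1, hq2⟩
  have hnull : Λ (⋃ q : ℚ, {σ | h σ ≤ (Real.toNNReal q : ℝ≥0∞) ∧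
      ((Real.toNNReal q : ℝ≥0∞) < 1)}) = 0 := by
    refine measure_iUnion_null fun q => ?_
    by_cases hq : ((Real.toNNReal q : ℝ≥0∞) < 1)
    · refine measure_mono_null (fun σ hσ => hσ.1) (key _ hq)
    · have : {σ : CodeSpace E | h σ ≤ (Real.toNNReal q : ℝ≥0∞) ∧
          ((Real.toNNReal q : ℝ≥0∞) < 1)} = ∅ := by
        ext σ; simp [hq]
      rw [this]
      exact measure_empty
  rw [ae_iff]
  have : {σ | ¬ 1 ≤ h σ} = {σ | h σ < 1} := by
    ext σ; simp [not_le]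
  rw [this]
  exact measure_mono_null hsub hnull

end Aux5

/-- If `M` is uniformly continuous and `F⁻¹(Ω) = ∅`, then `M` is
non-degenerate. -/
theorem nondegenerate_of_code_preimage_Omega_empty
    (M : MarkovSystem K N E) (j0 : N) (xp : N → K) (hxp : ∀ j, xp j ∈ M.Kset j)
    (huc : M.IsUniformlyContinuous)
    (pbar : E → K → ℝ) (hpbar : M.IsUCExtensionP pbar)
    (wb : E → K → K) (hwb : M.IsUCExtensionW wb)
    (hempty : (M.code j0 xp) ⁻¹' (M.OmegaSet pbar wb) = ∅) :
    M.IsNonDegenerate j0 xp pbar := by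
  intro Λ hΛ
  by_contra hcon
  push_neg at hcon
  obtain ⟨hprob, hinv, hD, hce⟩ := hΛ
  haveI := hprob
  have hle : pastAlgebra E ≤ (by infer_instance : MeasurableSpace (CodeSpace E)) := pastAlgebra_le
  have hg_m : Measurable[pastAlgebra E] (gfun M j0 xp) :=
    (stronglyMeasurable_gfun M j0 xp).measurable
  -- a.e. σ is in the coding domain
  have hDmeas : MeasurableSet (M.codeDomain j0 xp) := by
    rw [M.codeDomain_eq j0 xp]
    exact (M.measurableSet_pathSpace).inter (hle _ (measurableSet_cauchySet M j0 xp))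
  have hD_ae : ∀ᵐ σ ∂Λ, σ ∈ M.codeDomain j0 xp := by
    rw [ae_iff]
    have h1 : {σ : CodeSpace E | ¬ σ ∈ M.codeDomain j0 xp} = (M.codeDomain j0 xp)ᶜ := rfl
    rw [h1, measure_compl hDmeas (measure_ne_top _ _), hD, measure_univ, tsub_self]
  have hgF : ∀ᵐ σ ∂Λ, gfun M j0 xp σ = M.code j0 xp σ :=
    hD_ae.mono fun σ hσ => gfun_eq_code M j0 xp hσ
  -- shift transfer of a.e. statements
  have hshift_ae : ∀ {p : CodeSpace E → Prop}, (∀ᵐ σ ∂Λ, p σ) →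
      (∀ᵐ σ ∂Λ, p (shiftMap E σ)) := by
    intro p hp
    rw [ae_iff] at hp ⊢
    have hsub : {σ | ¬ p (shiftMap E σ)} ⊆ shiftMap E ⁻¹' (toMeasurable Λ {σ | ¬ p σ}) :=
      fun σ hσ => subset_toMeasurable Λ _ hσ
    refine measure_mono_null hsub ?_
    have h2 : Λ (shiftMap E ⁻¹' (toMeasurable Λ {σ | ¬ p σ})) =
        (Measure.map (shiftMap E) Λ) (toMeasurable Λ {σ | ¬ p σ}) :=
      (Measure.map_apply measurable_shiftMap (measurableSet_toMeasurable Λ _)).symm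
    rw [h2, hinv, measure_toMeasurable]
    exact hp
  -- degeneracy: a.e. σ avoids all T_i ∩ F⁻¹(K_i)
  have hdeg : ∀ᵐ σ ∂Λ, ∀ i : N, σ ∉ M.Tset i ∩ (M.code j0 xp) ⁻¹' (M.Kset i) := by
    rw [ae_all_iff]
    intro i
    have h0 : Λ (M.Tset i ∩ (M.code j0 xp) ⁻¹' (M.Kset i)) = 0 :=
      le_antisymm (hcon i) (zero_le)
    exact measure_eq_zero_iff_ae_notMem.mp h0
  -- comparison of the asymptotic density with ∂p ∘ g
  have hpsidp : ∀ᵐ σ ∂Λ, ∀ e : E,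
      ENNReal.ofReal ((M.Tset (M.i e)).indicator (fun τ => pbar e (M.code j0 xp τ)) σ)
        ≤ ENNReal.ofReal (M.dp pbar e (gfun M j0 xp σ)) := by
    filter_upwards [hdeg, hgF] with σ hσ hgFσ
    intro e
    by_cases hT : σ ∈ M.Tset (M.i e)
    · rw [Set.indicator_of_mem hT]
      have hnK : M.code j0 xp σ ∉ M.Kset (M.i e) := fun hK => hσ (M.i e) (Set.mem_inter hT hK)
      by_cases hcl : M.code j0 xp σ ∈ closure (M.Kset (M.i e))
      · have hdp : M.dp pbar e (gfun M j0 xp σ) = pbar e (M.code j0 xp σ) := by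
          rw [hgFσ, MarkovSystem.dp]
          exact Set.indicator_of_mem ((Set.mem_diff _).mpr ⟨hcl, hnK⟩) _
        rw [hdp]
      · rw [(hpbar e).2.2 _ hcl]
        simp
    · rw [Set.indicator_of_notMem hT]
      simp
  -- main induction: 1 ≤ Rⁿ1(g σ) a.e., for every n
  have hmain : ∀ n : ℕ, ∀ᵐ σ ∂Λ, 1 ≤ (M.Rop pbar wb)^[n] (fun _ => 1) (gfun M j0 xp σ) := by
    intro n
    induction n with
    | zero => simp
    | succ n ih =>
      have hIH_S : ∀ᵐ σ ∂Λ,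
          1 ≤ (M.Rop pbar wb)^[n] (fun _ => 1) (gfun M j0 xp (shiftMap E σ)) := hshift_ae ih
      have hm1 : ∀ᵐ σ ∂Λ, ∀ e : E, σ 1 = some e →
          min 1 ((M.Rop pbar wb)^[n] (fun _ => 1) (wbg M wb j0 xp e (gfun M j0 xp σ))) = 1 := by
        filter_upwards [hD_ae, hgF, hshift_ae hgF, hIH_S] with σ hσD hgFσ hgFS hRS
        intro e he
        obtain ⟨hSD, hcodeS, hclos⟩ := M.code_shift j0 xp hxp hwb hσD he
        have h1 : wbg M wb j0 xp e (gfun M j0 xp σ) = gfun M j0 xp (shiftMap E σ) := by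
          rw [hgFσ, wbg, Set.piecewise_eq_of_mem _ _ _ hclos, hgFS, hcodeS]
        rw [h1]
        exact min_eq_left hRS
      have hAineq : ∀ A : Set (CodeSpace E), MeasurableSet[pastAlgebra E] A →
          Λ A ≤ ∫⁻ σ in A, (M.Rop pbar wb)^[n + 1] (fun _ => 1) (gfun M j0 xp σ) ∂Λ := by
        intro A hA
        have hA' : MeasurableSet A := hle _ hA
        have hRn_m : Measurable ((M.Rop pbar wb)^[n] (fun _ => 1)) :=
          measurable_RopIter M hpbar hwb j0 xp n
        have hse : ∀ e : E, MeasurableSet {σ : CodeSpace E | σ 1 = some e} := fun e => by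
          show MeasurableSet ((fun σ : CodeSpace E => σ 1) ⁻¹' {some e})
          exact (measurable_pi_apply (X := fun _ : ℤ => Option E) 1) (measurableSet_option _)
        have hme_m : ∀ e : E, Measurable[pastAlgebra E] (fun σ =>
            min 1 ((M.Rop pbar wb)^[n] (fun _ => 1) (wbg M wb j0 xp e (gfun M j0 xp σ)))) :=
          fun e => measurable_const.min
            (((hRn_m.comp (measurable_wbg M hwb j0 xp e)).comp hg_m))
        -- Step 0: decompose Λ A according to the value of σ 1
        have h0 : Λ A = ∑' e : E, ∫⁻ σ, A.indicator 1 σ *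
            ({σ : CodeSpace E | σ 1 = some e}).indicator 1 σ ∂Λ := by
          rw [← lintegral_tsum (fun e => (show Measurable (fun σ => A.indicator (1 : CodeSpace E → ℝ≥0∞) σ *
            ({σ : CodeSpace E | σ 1 = some e}).indicator (1 : CodeSpace E → ℝ≥0∞) σ) from
            (measurable_one.indicator hA').mul (measurable_one.indicator (hse e))).aemeasurable)]
          rw [← lintegral_indicator_one hA']
          refine lintegral_congr_ae ?_
          filter_upwards [hD_ae] with σ hσD
          obtain ⟨e0, e1, h0', h1', -⟩ := hσD.1 0
          rw [show (0 : ℤ) + 1 = 1 by norm_num] at h1'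
          have hz : ∀ e : E, e ≠ e1 → A.indicator (1 : CodeSpace E → ℝ≥0∞) σ *
              ({σ : CodeSpace E | σ 1 = some e}).indicator (1 : CodeSpace E → ℝ≥0∞) σ = 0 := by
            intro e hne
            have : σ ∉ {σ : CodeSpace E | σ 1 = some e} := by
              intro hc
              rw [Set.mem_setOf_eq, h1'] at hc
              injection hc with hc
              exact hne hc.symm
            rw [Set.indicator_of_notMem this, mul_zero]
          symm
          calc ∑' (i : E), A.indicator (1 : CodeSpace E → ℝ≥0∞) σ *
                ({σ : CodeSpace E | σ 1 = some i}).indicator (1 : CodeSpace E → ℝ≥0∞) σ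
              = A.indicator (1 : CodeSpace E → ℝ≥0∞) σ *
                ({σ : CodeSpace E | σ 1 = some e1}).indicator (1 : CodeSpace E → ℝ≥0∞) σ :=
                tsum_eq_single e1 hz
            _ = A.indicator (1 : CodeSpace E → ℝ≥0∞) σ := by
                rw [Set.indicator_of_mem
                  (show σ ∈ {σ : CodeSpace E | σ 1 = some e1} from h1')]
                simp
        -- Step per e
        have hstep : ∀ e : E, ∫⁻ σ, A.indicator 1 σ *
            ({σ : CodeSpace E | σ 1 = some e}).indicator 1 σ ∂Λ ≤
            ∫⁻ σ, A.indicator 1 σ * (ENNReal.ofReal (M.dp pbar e (gfun M j0 xp σ)) *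
              (M.Rop pbar wb)^[n] (fun _ => 1) (wbg M wb j0 xp e (gfun M j0 xp σ))) ∂Λ := by
          intro e
          have e1 : ∫⁻ σ, A.indicator 1 σ *
              ({σ : CodeSpace E | σ 1 = some e}).indicator 1 σ ∂Λ =
              ∫⁻ σ, (A.indicator 1 σ *
                min 1 ((M.Rop pbar wb)^[n] (fun _ => 1) (wbg M wb j0 xp e (gfun M j0 xp σ)))) *
                ({σ : CodeSpace E | σ 1 = some e}).indicator 1 σ ∂Λ := by
            refine lintegral_congr_ae ?_
            filter_upwards [hm1] with σ hσ
            by_cases hmem : σ ∈ {σ : CodeSpace E | σ 1 = some e}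
            · rw [hσ e hmem, mul_one]
            · rw [Set.indicator_of_notMem hmem, mul_zero, mul_zero]
          have hGm : Measurable[pastAlgebra E] (fun σ => A.indicator 1 σ *
              min 1 ((M.Rop pbar wb)^[n] (fun _ => 1) (wbg M wb j0 xp e (gfun M j0 xp σ)))) := by
            refine Measurable.mul ?_ (hme_m e)
            exact Measurable.indicator
              (show Measurable[pastAlgebra E] (1 : CodeSpace E → ℝ≥0∞) from measurable_const) hA
          have e2 := lintegral_mul_indicator_condexp Λ (hse e) hGm
          have e3 : ∫⁻ σ, (A.indicator 1 σ *
              min 1 ((M.Rop pbar wb)^[n] (fun _ => 1) (wbg M wb j0 xp e (gfun M j0 xp σ)))) *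
              ENNReal.ofReal ((Λ[({σ : CodeSpace E | σ 1 = some e}).indicator
                (fun _ => (1 : ℝ)) | pastAlgebra E]) σ) ∂Λ =
              ∫⁻ σ, (A.indicator 1 σ *
                min 1 ((M.Rop pbar wb)^[n] (fun _ => 1) (wbg M wb j0 xp e (gfun M j0 xp σ)))) *
              ENNReal.ofReal ((M.Tset (M.i e)).indicator
                (fun τ => pbar e (M.code j0 xp τ)) σ) ∂Λ := by
            refine lintegral_congr_ae ?_
            filter_upwards [hce e] with σ hσ
            rw [hσ]
          have e4 : ∫⁻ σ, (A.indicator 1 σ *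
              min 1 ((M.Rop pbar wb)^[n] (fun _ => 1) (wbg M wb j0 xp e (gfun M j0 xp σ)))) *
              ENNReal.ofReal ((M.Tset (M.i e)).indicator
                (fun τ => pbar e (M.code j0 xp τ)) σ) ∂Λ ≤
              ∫⁻ σ, (A.indicator 1 σ *
                min 1 ((M.Rop pbar wb)^[n] (fun _ => 1) (wbg M wb j0 xp e (gfun M j0 xp σ)))) *
              ENNReal.ofReal (M.dp pbar e (gfun M j0 xp σ)) ∂Λ := by
            refine lintegral_mono_ae ?_
            filter_upwards [hpsidp] with σ hσ
            exact mul_le_mul_right (hσ e) _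
          have e5 : ∫⁻ σ, (A.indicator 1 σ *
              min 1 ((M.Rop pbar wb)^[n] (fun _ => 1) (wbg M wb j0 xp e (gfun M j0 xp σ)))) *
              ENNReal.ofReal (M.dp pbar e (gfun M j0 xp σ)) ∂Λ ≤
              ∫⁻ σ, A.indicator 1 σ * (ENNReal.ofReal (M.dp pbar e (gfun M j0 xp σ)) *
                (M.Rop pbar wb)^[n] (fun _ => 1) (wbg M wb j0 xp e (gfun M j0 xp σ))) ∂Λ := by
            refine lintegral_mono fun σ => ?_
            rw [mul_assoc]
            refine mul_le_mul_right ?_ _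
            rw [mul_comm]
            exact mul_le_mul_right (min_le_right _ _) _
          rw [e1, e2, e3]
          exact le_trans e4 e5
        calc Λ A = ∑' e : E, ∫⁻ σ, A.indicator 1 σ *
              ({σ : CodeSpace E | σ 1 = some e}).indicator 1 σ ∂Λ := h0
          _ ≤ ∑' e : E, ∫⁻ σ, A.indicator 1 σ *
              (ENNReal.ofReal (M.dp pbar e (gfun M j0 xp σ)) *
                (M.Rop pbar wb)^[n] (fun _ => 1) (wbg M wb j0 xp e (gfun M j0 xp σ))) ∂Λ :=
              ENNReal.tsum_le_tsum hstep
          _ = ∫⁻ σ, ∑' e : E, A.indicator 1 σ *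
              (ENNReal.ofReal (M.dp pbar e (gfun M j0 xp σ)) *
                (M.Rop pbar wb)^[n] (fun _ => 1) (wbg M wb j0 xp e (gfun M j0 xp σ))) ∂Λ := by
              refine (lintegral_tsum fun e => Measurable.aemeasurable ?_).symm
              refine (measurable_one.indicator hA').mul ?_
              exact ((measurable_ofReal_dp M hpbar e).comp (hg_m.mono hle le_rfl)).mul
                ((hRn_m.comp (measurable_wbg M hwb j0 xp e)).comp (hg_m.mono hle le_rfl))
          _ = ∫⁻ σ, A.indicator 1 σ *
              (M.Rop pbar wb)^[n + 1] (fun _ => 1) (gfun M j0 xp σ) ∂Λ := by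
              refine lintegral_congr fun σ => ?_
              rw [ENNReal.tsum_mul_left, Function.iterate_succ_apply',
                M.Rop_eq_good pbar wb j0 xp]
          _ = ∫⁻ σ in A, (M.Rop pbar wb)^[n + 1] (fun _ => 1) (gfun M j0 xp σ) ∂Λ := by
              rw [← lintegral_indicator hA']
              refine lintegral_congr fun σ => ?_
              by_cases hmem : σ ∈ A
              · simp [Set.indicator_of_mem hmem]
              · simp [Set.indicator_of_notMem hmem]
      exact ae_one_le_of_forall_setLIntegral Λ
        ((measurable_RopIter M hpbar hwb j0 xp (n + 1)).comp hg_m) hAineq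
  -- conclusion
  have hall : ∀ᵐ σ ∂Λ, ∀ n : ℕ, 1 ≤ (M.Rop pbar wb)^[n + 1] (fun _ => 1) (gfun M j0 xp σ) :=
    ae_all_iff.mpr fun n => hmain (n + 1)
  have hOmega : ∀ᵐ σ ∂Λ, σ ∈ (M.code j0 xp) ⁻¹' (M.OmegaSet pbar wb) := by
    filter_upwards [hall, hgF] with σ h1 h2
    refine Set.mem_preimage.mpr (Set.mem_iInter.mpr fun n => ?_)
    have := h1 n
    rwa [h2] at this
  rw [hempty] at hOmega
  have huniv : Λ Set.univ = 0 := by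
    rw [ae_iff] at hOmega
    simpa using hOmega
  rw [measure_univ] at huniv
  exact one_ne_zero huniv
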